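/- arXiv:1802.08961 — 5 statements merged into one kernel-verified Lean document; each statement's English description precedes it below -/
import Mathlib

section
/- Let φ, ψ ∈ ℝⁿ and A = 𝟙𝟙ᵀ − (𝟙 − ψ)(𝟙 − φ)ᵀ. If v = s₁𝟙 + s₂(𝟙 − ψ) and 𝟙, 𝟙−ψ are linearly independent, then Av = λv if and only if nB(s₁,s₂)ᵀ = λ(s₁,s₂)ᵀ, where B = [[1, 1 − ⟨ψ⟩], [−1 + ⟨φ⟩, −1 + ⟨φ⟩ + ⟨ψ⟩ − ⟨φψ⟩]]. -/
open Matrix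

lemma vecMulVec_mulVec' {n : ℕ} (a b v : Fin n → ℝ) :
    (vecMulVec a b).mulVec v = (b ⬝ᵥ v) • a := by
  funext i
  simp only [Matrix.mulVec, dotProduct, Matrix.vecMulVec_apply, Pi.smul_apply,
    smul_eq_mul, Finset.mul_sum]
  rw [Finset.sum_mul]
  exact Finset.sum_congr rfl fun j _ => by ring

/-- For A = 𝟙𝟙ᵀ − (𝟙−ψ)(𝟙−φ)ᵀ and v = s₁𝟙 + s₂(𝟙−ψ) with 𝟙, 𝟙−ψ
linearly independent, Av = λv iff nB(s₁,s₂)ᵀ = λ(s₁,s₂)ᵀ. -/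
theorem stmt3 (n : ℕ) (hn : 1 ≤ n) (φ ψ : Fin n → ℝ) (s₁ s₂ lam : ℝ) :
    let one : Fin n → ℝ := fun _ => 1
    let A : Matrix (Fin n) (Fin n) ℝ := vecMulVec one one - vecMulVec (one - ψ) (one - φ)
    let avφ := (1 / (n : ℝ)) * ∑ i, φ i
    let avψ := (1 / (n : ℝ)) * ∑ i, ψ i
    let avφψ := (1 / (n : ℝ)) * ∑ i, φ i * ψ i
    let B : Matrix (Fin 2) (Fin 2) ℝ :=
      !![1, 1 - avψ; -1 + avφ, -1 + avφ + avψ - avφψ]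
    let v : Fin n → ℝ := s₁ • one + s₂ • (one - ψ)
    LinearIndependent ℝ ![one, one - ψ] →
      (A.mulVec v = lam • v ↔ ((n : ℝ) • B).mulVec ![s₁, s₂] = lam • ![s₁, s₂]) := by
  intro one A avφ avψ avφψ B v hLI
  have hn0 : (n : ℝ) ≠ 0 := by positivity
  set Sφ := ∑ i, φ i with hSφ
  set Sψ := ∑ i, ψ i with hSψ
  set Sφψ := ∑ i, φ i * ψ i with hSφψ
  set c₁ : ℝ := s₁ * n + s₂ * (n - Sψ) with hc₁
  set c₂ : ℝ := -(s₁ * (n - Sφ) + s₂ * (n - Sφ - Sψ + Sφψ)) with hc₂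
  have hd1 : one ⬝ᵥ v = c₁ := by
    simp only [dotProduct, v, one, Pi.add_apply, Pi.smul_apply, Pi.sub_apply,
      smul_eq_mul, Matrix.head_fin_const]
    rw [Finset.sum_congr rfl (fun j _ => show
      (1 : ℝ) * (s₁ * 1 + s₂ * (1 - ψ j)) = (s₁ + s₂) - s₂ * ψ j by ring)]
    rw [Finset.sum_sub_distrib, Finset.sum_const, ← Finset.mul_sum]
    simp only [Finset.card_univ, Fintype.card_fin, nsmul_eq_mul, hc₁, ← hSψ]
    ring
  have hd2 : (one - φ) ⬝ᵥ v = -c₂ := by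
    simp only [dotProduct, v, one, Pi.add_apply, Pi.smul_apply, Pi.sub_apply,
      smul_eq_mul, Matrix.head_fin_const]
    rw [Finset.sum_congr rfl (fun j _ => show
      ((1 : ℝ) - φ j) * (s₁ * 1 + s₂ * (1 - ψ j))
        = ((s₁ + s₂) - s₂ * ψ j) - ((s₁ + s₂) * φ j - s₂ * (φ j * ψ j)) by ring)]
    rw [Finset.sum_sub_distrib, Finset.sum_sub_distrib, Finset.sum_sub_distrib,
      Finset.sum_const, ← Finset.mul_sum, ← Finset.mul_sum, ← Finset.mul_sum]
    simp only [Finset.card_univ, Fintype.card_fin, nsmul_eq_mul, hc₂, ← hSψ, ← hSφ, ← hSφψ]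
    ring
  have hAv : A.mulVec v = c₁ • one + c₂ • (one - ψ) := by
    simp only [A, Matrix.sub_mulVec, vecMulVec_mulVec', hd1, hd2, neg_smul, sub_neg_eq_add]
  have hlamv : lam • v = (lam * s₁) • one + (lam * s₂) • (one - ψ) := by
    simp only [v, smul_add, smul_smul]
  have key : A.mulVec v = lam • v ↔ (c₁ = lam * s₁ ∧ c₂ = lam * s₂) := by
    rw [hAv, hlamv]
    constructor
    · intro h
      have h0 : (c₁ - lam * s₁) • one + (c₂ - lam * s₂) • (one - ψ) = 0 := by
        rw [sub_smul, sub_smul, sub_add_sub_comm, h, sub_self]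
      obtain ⟨e1, e2⟩ := LinearIndependent.pair_iff.mp hLI _ _ h0
      exact ⟨by linarith [sub_eq_zero.mp e1], by linarith [sub_eq_zero.mp e2]⟩
    · rintro ⟨h1, h2⟩; rw [h1, h2]
  have havφ : (n : ℝ) * avφ = Sφ := by
    show (n : ℝ) * (1 / (n : ℝ) * Sφ) = Sφ; field_simp
  have havψ : (n : ℝ) * avψ = Sψ := by
    show (n : ℝ) * (1 / (n : ℝ) * Sψ) = Sψ; field_simp
  have havφψ : (n : ℝ) * avφψ = Sφψ := by
    show (n : ℝ) * (1 / (n : ℝ) * Sφψ) = Sφψ; field_simp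
  rw [key, funext_iff, Fin.forall_fin_two]
  simp only [Matrix.mulVec, dotProduct, Fin.sum_univ_two, Matrix.smul_apply, B,
    Matrix.cons_val_zero, Matrix.cons_val_one, Matrix.head_cons, Matrix.of_apply,
    Matrix.cons_val', Matrix.empty_val', Matrix.cons_val_fin_one, Pi.smul_apply,
    smul_eq_mul, Matrix.head_fin_const]
  constructor
  · rintro ⟨h1, h2⟩
    constructor
    · rw [hc₁] at h1; linear_combination h1 - s₂ * havψ
    · rw [hc₂] at h2
      linear_combination h2 + s₁ * havφ + s₂ * havφ + s₂ * havψ - s₂ * havφψ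
  · rintro ⟨h1, h2⟩
    constructor
    · rw [hc₁]; linear_combination h1 + s₂ * havψ
    · rw [hc₂]
      linear_combination h2 - s₁ * havφ - s₂ * havφ - s₂ * havψ + s₂ * havφψ
end

section
/- Let φ_i = m̄χ_i a_i and ψ_i = m̄π_i a_i where a_i, χ_i, π_i ∈ (0,1] and m̄ ∈ (0,1]. Then the spectral radius of the 2×2 matrix B = [[1, 1−⟨ψ⟩],[−1+⟨φ⟩, −1+⟨φ⟩+⟨ψ⟩−⟨φψ⟩]] equals m̄·κ, where κ = (⟨χ⟩ₐ + ⟨π⟩ₐ − m̄⟨χπ⟩_{a²} + √((⟨χ⟩ₐ + ⟨π⟩ₐ − m̄⟨χπ⟩_{a²})² + 4(⟨χπ⟩_{a²} − ⟨χ⟩ₐ⟨π⟩ₐ)))/2, with ⟨ξ⟩ₐ = (1/n)∑a_iξ_i and ⟨ξ⟩_{a²} = (1/n)∑a_i²ξ_i. -/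
open Matrix

/-- Spectral radius of a real square matrix: the supremum of the absolute values of
its complex eigenvalues (roots of the characteristic polynomial over ℂ). -/
noncomputable def specRad {n : ℕ} (M : Matrix (Fin n) (Fin n) ℝ) : ℝ :=
  sSup {r : ℝ | ∃ μ : ℂ, (M.map (fun x => (x : ℂ))).charpoly.IsRoot μ ∧ r = ‖μ‖}

lemma charpoly_eval_fin_two' (M : Matrix (Fin 2) (Fin 2) ℂ) (μ : ℂ) :
    M.charpoly.eval μ = μ^2 - M.trace * μ + M.det := by
  rw [Matrix.charpoly, Matrix.det_fin_two,
    Matrix.charmatrix_apply_eq, Matrix.charmatrix_apply_eq,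
    Matrix.charmatrix_apply_ne _ _ _ (by decide), Matrix.charmatrix_apply_ne _ _ _ (by decide),
    Matrix.trace_fin_two, Matrix.det_fin_two]
  simp only [Polynomial.eval_sub, Polynomial.eval_mul, Polynomial.eval_neg, Polynomial.eval_X,
    Polynomial.eval_C]
  ring

lemma specRad_fin_two' (B : Matrix (Fin 2) (Fin 2) ℝ) (ht : 0 ≤ B.trace)
    (hd : 4 * B.det ≤ B.trace ^ 2) :
    specRad B = (B.trace + Real.sqrt (B.trace ^ 2 - 4 * B.det)) / 2 := by
  set t := B.trace with htdef
  set d := B.det with hddef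
  set s := Real.sqrt (t ^ 2 - 4 * d) with hsdef
  have hs0 : 0 ≤ s := Real.sqrt_nonneg _
  have hs2 : s ^ 2 = t ^ 2 - 4 * d := Real.sq_sqrt (by linarith)
  set r1 := (t + s) / 2 with hr1def
  set r2 := (t - s) / 2 with hr2def
  have htr : (B.map (fun x => (x : ℂ))).trace = (t : ℂ) := by
    simp [Matrix.trace_fin_two, Matrix.map_apply, htdef]
  have hdet : (B.map (fun x => (x : ℂ))).det = (d : ℂ) := by
    simp [Matrix.det_fin_two, Matrix.map_apply, hddef]
  have hroot : ∀ μ : ℂ, (B.map (fun x => (x : ℂ))).charpoly.IsRoot μ ↔ μ = r1 ∨ μ = r2 := by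
    intro μ
    rw [Polynomial.IsRoot, charpoly_eval_fin_two', htr, hdet]
    have hsum : r1 + r2 = t := by rw [hr1def, hr2def]; ring
    have hprod : r1 * r2 = d := by rw [hr1def, hr2def]; nlinarith [hs2]
    constructor
    · intro h
      have key : (μ - r1) * (μ - r2) = 0 := by
        have expand : (μ - r1) * (μ - r2) = μ ^ 2 - ((r1 : ℂ) + r2) * μ + (r1 : ℂ) * r2 := by
          ring
        rw [expand, show ((r1 : ℂ) + r2) = (t : ℂ) by
            exact_mod_cast congrArg (fun x : ℝ => (x : ℂ)) hsum,
          show ((r1 : ℂ) * r2) = (d : ℂ) by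
            exact_mod_cast congrArg (fun x : ℝ => (x : ℂ)) hprod, h]
      rcases mul_eq_zero.mp key with h' | h'
      · exact Or.inl (sub_eq_zero.mp h')
      · exact Or.inr (sub_eq_zero.mp h')
    · rintro (rfl | rfl)
      · have : r1 ^ 2 - t * r1 + d = 0 := by nlinarith [hs2]
        have := congrArg (fun x : ℝ => (x : ℂ)) this
        push_cast at this
        convert this using 1
      · have : r2 ^ 2 - t * r2 + d = 0 := by nlinarith [hs2]
        have := congrArg (fun x : ℝ => (x : ℂ)) this
        push_cast at this
        convert this using 1
  have hset : {r : ℝ | ∃ μ : ℂ, (B.map (fun x => (x : ℂ))).charpoly.IsRoot μ ∧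
      r = ‖μ‖} = {|r1|, |r2|} := by
    ext r
    simp only [Set.mem_setOf_eq, Set.mem_insert_iff, Set.mem_singleton_iff]
    constructor
    · rintro ⟨μ, hμ, rfl⟩
      rcases (hroot μ).mp hμ with rfl | rfl
      · exact Or.inl (Complex.norm_real _)
      · exact Or.inr (Complex.norm_real _)
    · rintro (rfl | rfl)
      · exact ⟨r1, (hroot r1).mpr (Or.inl rfl), (Complex.norm_real _).symm⟩
      · exact ⟨r2, (hroot r2).mpr (Or.inr rfl), (Complex.norm_real _).symm⟩
  rw [specRad, hset, csSup_pair]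
  have h1 : |r1| = r1 := abs_of_nonneg (by rw [hr1def]; positivity)
  have h2 : |r2| ≤ r1 :=
    abs_le.mpr ⟨by rw [hr1def, hr2def]; linarith, by rw [hr1def, hr2def]; linarith⟩
  rw [h1, sup_eq_left.mpr h2, hr1def]

/-- With φᵢ = m̄χᵢaᵢ and ψᵢ = m̄πᵢaᵢ (aᵢ, χᵢ, πᵢ, m̄ ∈ (0,1]),
the spectral radius of B = [[1, 1−⟨ψ⟩],[−1+⟨φ⟩, −1+⟨φ⟩+⟨ψ⟩−⟨φψ⟩]] equals m̄·κ,
where κ is given by the explicit formula in terms of the weighted averages. -/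
theorem stmt10 (n : ℕ) (hn : 1 ≤ n) (a χ π : Fin n → ℝ) (mbar : ℝ)
    (ha : ∀ i, 0 < a i ∧ a i ≤ 1) (hχ : ∀ i, 0 < χ i ∧ χ i ≤ 1)
    (hπ : ∀ i, 0 < π i ∧ π i ≤ 1) (hm : 0 < mbar) (hm1 : mbar ≤ 1) :
    let φ : Fin n → ℝ := fun i => mbar * χ i * a i
    let ψ : Fin n → ℝ := fun i => mbar * π i * a i
    let avφ := (1 / (n : ℝ)) * ∑ i, φ i
    let avψ := (1 / (n : ℝ)) * ∑ i, ψ i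
    let avφψ := (1 / (n : ℝ)) * ∑ i, φ i * ψ i
    let B : Matrix (Fin 2) (Fin 2) ℝ :=
      !![1, 1 - avψ; -1 + avφ, -1 + avφ + avψ - avφψ]
    let χa := (1 / (n : ℝ)) * ∑ i, a i * χ i
    let πa := (1 / (n : ℝ)) * ∑ i, a i * π i
    let χπa2 := (1 / (n : ℝ)) * ∑ i, a i ^ 2 * (χ i * π i)
    let κ := (χa + πa - mbar * χπa2 +
      Real.sqrt ((χa + πa - mbar * χπa2) ^ 2 + 4 * (χπa2 - χa * πa))) / 2
    specRad B = mbar * κ := by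
  intro φ ψ avφ avψ avφψ B χa πa χπa2 κ
  have hNpos : (0 : ℝ) < (n : ℝ) := by exact_mod_cast hn
  have : Nonempty (Fin n) := ⟨⟨0, hn⟩⟩
  have hNinv : (0 : ℝ) ≤ 1 / (n : ℝ) := by positivity
  -- positivity of averages
  have hpos : ∀ f : Fin n → ℝ, (∀ i, 0 < f i) → 0 < (1 / (n : ℝ)) * ∑ i, f i := fun f hf =>
    mul_pos (by positivity) (Finset.sum_pos (fun i _ => hf i) Finset.univ_nonempty)
  have hu0 : 0 < χa := hpos _ fun i => mul_pos (ha i).1 (hχ i).1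
  have hv0 : 0 < πa := hpos _ fun i => mul_pos (ha i).1 (hπ i).1
  have hw0 : 0 < χπa2 := hpos _ fun i =>
    mul_pos (pow_pos (ha i).1 2) (mul_pos (hχ i).1 (hπ i).1)
  -- averages bounded by 1
  have hav1 : ∀ f : Fin n → ℝ, (∀ i, f i ≤ 1) → (1 / (n : ℝ)) * ∑ i, f i ≤ 1 := by
    intro f hf
    have h : ∑ i, f i ≤ (n : ℝ) := by
      calc ∑ i, f i ≤ ∑ _i : Fin n, (1 : ℝ) := Finset.sum_le_sum fun i _ => hf i
        _ = (n : ℝ) := by simp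
    calc (1 / (n : ℝ)) * ∑ i, f i ≤ (1 / (n : ℝ)) * (n : ℝ) :=
          mul_le_mul_of_nonneg_left h hNinv
      _ = 1 := by field_simp
  have hu1 : χa ≤ 1 := hav1 _ fun i => by nlinarith [(ha i).1, (ha i).2, (hχ i).1, (hχ i).2]
  have hv1 : πa ≤ 1 := hav1 _ fun i => by nlinarith [(ha i).1, (ha i).2, (hπ i).1, (hπ i).2]
  have hwu : χπa2 ≤ χa :=
    mul_le_mul_of_nonneg_left
      (Finset.sum_le_sum fun i _ => by
        nlinarith [mul_nonneg (mul_nonneg (ha i).1.le (hχ i).1.le)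
          (sub_nonneg.mpr (mul_le_one₀ (ha i).2 (hπ i).1.le (hπ i).2))])
      hNinv
  -- sum identities
  have eφ : avφ = mbar * χa := by
    show (1 / (n : ℝ)) * ∑ i, φ i = mbar * ((1 / (n : ℝ)) * ∑ i, a i * χ i)
    rw [show ∑ i, φ i = mbar * ∑ i, a i * χ i by
      rw [Finset.mul_sum]
      exact Finset.sum_congr rfl fun i _ => by show mbar * χ i * a i = mbar * (a i * χ i); ring]
    ring
  have eψ : avψ = mbar * πa := by
    show (1 / (n : ℝ)) * ∑ i, ψ i = mbar * ((1 / (n : ℝ)) * ∑ i, a i * π i)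
    rw [show ∑ i, ψ i = mbar * ∑ i, a i * π i by
      rw [Finset.mul_sum]
      exact Finset.sum_congr rfl fun i _ => by show mbar * π i * a i = mbar * (a i * π i); ring]
    ring
  have eφψ : avφψ = mbar ^ 2 * χπa2 := by
    show (1 / (n : ℝ)) * ∑ i, φ i * ψ i = mbar ^ 2 * ((1 / (n : ℝ)) * ∑ i, a i ^ 2 * (χ i * π i))
    rw [show ∑ i, φ i * ψ i = mbar ^ 2 * ∑ i, a i ^ 2 * (χ i * π i) by
      rw [Finset.mul_sum]
      exact Finset.sum_congr rfl fun i _ => by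
        show (mbar * χ i * a i) * (mbar * π i * a i) = mbar ^ 2 * (a i ^ 2 * (χ i * π i)); ring]
    ring
  -- trace and determinant
  have hBtr : B.trace = avφ + avψ - avφψ := by
    rw [show B = !![1, 1 - avψ; -1 + avφ, -1 + avφ + avψ - avφψ] from rfl, Matrix.trace_fin_two]
    simp
    ring
  have hBdet : B.det = avφ * avψ - avφψ := by
    rw [show B = !![1, 1 - avψ; -1 + avφ, -1 + avφ + avψ - avφψ] from rfl, Matrix.det_fin_two]
    simp
    ring
  have hmu1 : mbar * χa ≤ 1 := mul_le_one₀ hm1 hu0.le hu1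
  have hmv1 : mbar * πa ≤ 1 := mul_le_one₀ hm1 hv0.le hv1
  have hdisc : 0 ≤ (χa + πa - mbar * χπa2) ^ 2 + 4 * (χπa2 - χa * πa) := by
    nlinarith [sq_nonneg (χa - πa), sq_nonneg (mbar * χπa2),
      mul_nonneg hw0.le (sub_nonneg.mpr hmu1), mul_nonneg hw0.le (sub_nonneg.mpr hmv1)]
  have hkey : B.trace ^ 2 - 4 * B.det =
      mbar ^ 2 * ((χa + πa - mbar * χπa2) ^ 2 + 4 * (χπa2 - χa * πa)) := by
    rw [hBtr, hBdet, eφ, eψ, eφψ]; ring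
  have ht : 0 ≤ B.trace := by
    rw [hBtr, eφ, eψ, eφψ]
    nlinarith [mul_nonneg hm.le (sub_nonneg.mpr hwu),
      mul_nonneg (mul_nonneg hm.le (sub_nonneg.mpr hm1)) hw0.le,
      mul_nonneg hm.le hv0.le]
  have hd : 4 * B.det ≤ B.trace ^ 2 := by
    have h0 : 0 ≤ mbar ^ 2 * ((χa + πa - mbar * χπa2) ^ 2 + 4 * (χπa2 - χa * πa)) :=
      mul_nonneg (sq_nonneg _) hdisc
    linarith [hkey]
  rw [specRad_fin_two' B ht hd, hkey, Real.sqrt_mul (sq_nonneg mbar), Real.sqrt_sq hm.le,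
    hBtr, eφ, eψ, eφψ,
    show κ = (χa + πa - mbar * χπa2 +
      Real.sqrt ((χa + πa - mbar * χπa2) ^ 2 + 4 * (χπa2 - χa * πa))) / 2 from rfl]
  ring
end

section
/- Fix P, S > 0 with P, S ≤ 1. Define, for q with PS ≤ q ≤ min(P,S), h(q) = (P + S − q + √((P + S − q)² + 4(q − PS)))/2, the larger root of (1−λ)q = (λ−P)(λ−S). Then h is strictly increasing in q on this interval. -/
/-- For fixed P, S ∈ (0,1], the larger-root function
h(q) = (P + S − q + √((P+S−q)² + 4(q−PS)))/2 is strictly increasing in q on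
the interval [PS, min(P,S)]. -/
theorem stmt11 (P S : ℝ) (hP : 0 < P) (hP1 : P ≤ 1) (hS : 0 < S) (hS1 : S ≤ 1) :
    let h : ℝ → ℝ := fun q => (P + S - q + Real.sqrt ((P + S - q) ^ 2 + 4 * (q - P * S))) / 2
    ∀ q₁ q₂ : ℝ, P * S ≤ q₁ → q₁ < q₂ → q₂ ≤ min P S → h q₁ < h q₂ := by
  intro h q₁ q₂ h1 h12 h2
  have hq2P : q₂ ≤ P := le_trans h2 (min_le_left P S)
  have hq2S : q₂ ≤ S := le_trans h2 (min_le_right P S)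
  by_cases hPlt : P < 1
  · by_cases hSlt : S < 1
    · have hd1 : (0:ℝ) ≤ (P + S - q₁) ^ 2 + 4 * (q₁ - P * S) := by
        nlinarith [sq_nonneg (P + S - q₁)]
      have hd2 : (0:ℝ) ≤ (P + S - q₂) ^ 2 + 4 * (q₂ - P * S) := by
        nlinarith [sq_nonneg (P + S - q₂)]
      have hs1 := Real.sq_sqrt hd1
      have hs1n := Real.sqrt_nonneg ((P + S - q₁) ^ 2 + 4 * (q₁ - P * S))
      have hpos : (0:ℝ) < 2 - (P + S - q₁) := by nlinarith
      have key1 : Real.sqrt ((P + S - q₁) ^ 2 + 4 * (q₁ - P * S)) < 2 - (P + S - q₁) := by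
        rw [show (2 - (P + S - q₁)) = Real.sqrt ((2 - (P + S - q₁))^2) by
          rw [Real.sqrt_sq hpos.le]]
        apply Real.sqrt_lt_sqrt hd1
        nlinarith
      have key2 : Real.sqrt ((P + S - q₁) ^ 2 + 4 * (q₁ - P * S)) + (q₂ - q₁)
          < Real.sqrt ((P + S - q₂) ^ 2 + 4 * (q₂ - P * S)) := by
        have hy : (0:ℝ) ≤ Real.sqrt ((P + S - q₁) ^ 2 + 4 * (q₁ - P * S)) + (q₂ - q₁) := by
          linarith
        rw [show Real.sqrt ((P + S - q₁) ^ 2 + 4 * (q₁ - P * S)) + (q₂ - q₁)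
            = Real.sqrt ((Real.sqrt ((P + S - q₁) ^ 2 + 4 * (q₁ - P * S)) + (q₂ - q₁))^2) by
          rw [Real.sqrt_sq hy]]
        apply Real.sqrt_lt_sqrt (sq_nonneg _)
        nlinarith [key1, hs1, hs1n]
      show (P + S - q₁ + Real.sqrt ((P + S - q₁) ^ 2 + 4 * (q₁ - P * S))) / 2
          < (P + S - q₂ + Real.sqrt ((P + S - q₂) ^ 2 + 4 * (q₂ - P * S))) / 2
      linarith
    · -- S = 1, so P*S = P ≥ q₂ > q₁ ≥ P*S, contradiction
      exfalso
      have hS1' : S = 1 := le_antisymm hS1 (not_lt.mp hSlt)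
      rw [hS1'] at h1
      nlinarith
  · -- P = 1
    exfalso
    have hP1' : P = 1 := le_antisymm hP1 (not_lt.mp hPlt)
    rw [hP1'] at h1
    nlinarith
end

section
/- (Corollary on correlations) Let (χ,π) and (χ',π') be vectors in (0,1]ⁿ with ⟨χ⟩ₐ = ⟨χ'⟩ₐ, ⟨π⟩ₐ = ⟨π'⟩ₐ, and ⟨χπ⟩_{a²} < ⟨χ'π'⟩_{a²}. Then the corresponding upper bounds satisfy α_u < α_u', where α_u = 1 − δ + κ m̄ n β with κ defined as the larger root of the quadratic (1−λ')⟨χπ⟩_{a²}m̄² = (λ'm̄ − m̄⟨χ⟩ₐ)(λ'm̄ − m̄⟨π⟩ₐ) rescaled appropriately, i.e. κ = (⟨χ⟩ₐ + ⟨π⟩ₐ − m̄⟨χπ⟩_{a²} + √((⟨χ⟩ₐ + ⟨π⟩ₐ − m̄⟨χπ⟩_{a²})² + 4(⟨χπ⟩_{a²} − ⟨χ⟩ₐ⟨π⟩ₐ)))/2. -/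
lemma avg_le_one' {n : ℕ} (hn : 1 ≤ n) (f : Fin n → ℝ) (hf : ∀ i, f i ≤ 1) :
    (1 / (n : ℝ)) * ∑ i, f i ≤ 1 := by
  have hn0 : (0:ℝ) < n := by exact_mod_cast hn
  have : ∑ i, f i ≤ ∑ _i : Fin n, (1:ℝ) := Finset.sum_le_sum (fun i _ => hf i)
  simp at this
  rw [div_mul_eq_mul_div, one_mul, div_le_one hn0]
  exact this

lemma avg_pos' {n : ℕ} (hn : 1 ≤ n) (f : Fin n → ℝ) (hf : ∀ i, 0 < f i) :
    0 < (1 / (n : ℝ)) * ∑ i, f i := by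
  have hn0 : (0:ℝ) < n := by exact_mod_cast hn
  have hne : (Finset.univ : Finset (Fin n)).Nonempty := by
    simpa [Finset.univ_nonempty_iff] using Fin.pos_iff_nonempty.mp hn
  have : 0 < ∑ i, f i := Finset.sum_pos (fun i _ => hf i) hne
  positivity

lemma avg_eq_one' {n : ℕ} (hn : 1 ≤ n) (f : Fin n → ℝ) (hf : ∀ i, f i ≤ 1)
    (h : (1 / (n : ℝ)) * ∑ i, f i = 1) : ∀ i, f i = 1 := by
  have hn0 : (0:ℝ) < n := by exact_mod_cast hn
  have hsum : ∑ i, f i = (n : ℝ) := by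
    field_simp at h; linarith
  intro j
  by_contra hne
  have hj : f j < 1 := lt_of_le_of_ne (hf j) hne
  have hlt : ∑ i, f i < ∑ _i : Fin n, (1:ℝ) :=
    Finset.sum_lt_sum (fun i _ => hf i) ⟨j, Finset.mem_univ j, hj⟩
  simp at hlt
  linarith

lemma key_eq' {n : ℕ} (hn : 1 ≤ n) (a x y x' y' : Fin n → ℝ)
    (ha : ∀ i, 0 < a i ∧ a i ≤ 1) (hx : ∀ i, 0 < x i ∧ x i ≤ 1)
    (hx' : ∀ i, 0 < x' i ∧ x' i ≤ 1)
    (hax : (1 / (n : ℝ)) * ∑ i, a i * x i = 1)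
    (hxx : (1 / (n : ℝ)) * ∑ i, a i * x i = (1 / (n : ℝ)) * ∑ i, a i * x' i)
    (hyy : (1 / (n : ℝ)) * ∑ i, a i * y i = (1 / (n : ℝ)) * ∑ i, a i * y' i) :
    (1 / (n : ℝ)) * ∑ i, a i ^ 2 * (x i * y i)
      = (1 / (n : ℝ)) * ∑ i, a i ^ 2 * (x' i * y' i) := by
  have hax1 : ∀ i, a i * x i = 1 :=
    avg_eq_one' hn _ (fun i => mul_le_one₀ (ha i).2 (hx i).1.le (hx i).2) hax
  have ha1 : ∀ i, a i = 1 := fun i =>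
    le_antisymm (ha i).2 (by nlinarith [(hx i).2, (ha i).1, (hx i).1, hax1 i])
  have hx1 : ∀ i, x i = 1 := fun i => by have := hax1 i; rw [ha1 i, one_mul] at this; exact this
  have hx'1 : ∀ i, x' i = 1 := by
    apply avg_eq_one' hn _ (fun i => (hx' i).2)
    rw [show ∑ i, x' i = ∑ i, a i * x' i from Finset.sum_congr rfl fun i _ => by rw [ha1 i, one_mul],
      ← hxx, hax]
  have e1 : ∑ i, a i ^ 2 * (x i * y i) = ∑ i, a i * y i :=
    Finset.sum_congr rfl fun i _ => by rw [ha1 i, hx1 i]; ring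
  have e2 : ∑ i, a i ^ 2 * (x' i * y' i) = ∑ i, a i * y' i :=
    Finset.sum_congr rfl fun i _ => by rw [ha1 i, hx'1 i]; ring
  rw [e1, e2, hyy]

set_option maxHeartbeats 1000000 in
lemma kappa_mono (A B C C' mbar : ℝ) (hA1 : A ≤ 1) (hB1 : B ≤ 1)
    (hA0 : 0 < A) (hB0 : 0 < B) (hC0 : 0 < C) (h3 : C < C')
    (hm : 0 < mbar) (hm1 : mbar ≤ 1)
    (hD : 0 ≤ (A + B - mbar * C) ^ 2 + 4 * (C - A * B))
    (hD' : 0 ≤ (A + B - mbar * C') ^ 2 + 4 * (C' - A * B))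
    (hlt : 0 < (1 - mbar * A) * (1 - mbar * B)) :
    (A + B - mbar * C + Real.sqrt ((A + B - mbar * C) ^ 2 + 4 * (C - A * B))) / 2
      < (A + B - mbar * C' + Real.sqrt ((A + B - mbar * C') ^ 2 + 4 * (C' - A * B))) / 2 := by
  have hC'0 : 0 < C' := lt_trans hC0 h3
  set t := Real.sqrt ((A + B - mbar * C) ^ 2 + 4 * (C - A * B)) with htdef
  set t' := Real.sqrt ((A + B - mbar * C') ^ 2 + 4 * (C' - A * B)) with ht'def
  have ht2 : t ^ 2 = (A + B - mbar * C) ^ 2 + 4 * (C - A * B) := Real.sq_sqrt hD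
  have ht'2 : t' ^ 2 = (A + B - mbar * C') ^ 2 + 4 * (C' - A * B) := Real.sq_sqrt hD'
  have ht0 : 0 ≤ t := Real.sqrt_nonneg _
  have ht'0 : 0 ≤ t' := Real.sqrt_nonneg _
  clear_value t t'
  set K := (A + B - mbar * C + t) / 2 with hKdef
  set K' := (A + B - mbar * C' + t') / 2 with hK'def
  have hroot : K ^ 2 - (A + B - mbar * C) * K - (C - A * B) = 0 := by
    rw [hKdef]; linear_combination ht2 / 4
  have hroot' : K' ^ 2 - (A + B - mbar * C') * K' - (C' - A * B) = 0 := by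
    rw [hK'def]; linear_combination ht'2 / 4
  have hkey : (2 - mbar * (A + B - mbar * C)) ^ 2 - (mbar * t) ^ 2
      = 4 * ((1 - mbar * A) * (1 - mbar * B)) := by
    linear_combination (-(mbar ^ 2)) * ht2
  have hkey' : (2 - mbar * (A + B - mbar * C')) ^ 2 - (mbar * t') ^ 2
      = 4 * ((1 - mbar * A) * (1 - mbar * B)) := by
    linear_combination (-(mbar ^ 2)) * ht'2
  have hmA : mbar * A ≤ 1 := mul_le_one₀ hm1 hA0.le hA1
  have hmB : mbar * B ≤ 1 := mul_le_one₀ hm1 hB0.le hB1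
  have hR : 0 < 2 - mbar * (A + B - mbar * C) := by
    nlinarith [mul_pos (mul_pos hm hm) hC0]
  have hR' : 0 < 2 - mbar * (A + B - mbar * C') := by
    nlinarith [mul_pos (mul_pos hm hm) hC'0]
  have hmK : mbar * K ≤ 1 := by
    rw [hKdef]; nlinarith [hkey, hlt, hR, mul_nonneg hm.le ht0]
  have hmK' : mbar * K' < 1 := by
    rw [hK'def]; nlinarith [hkey', hlt, hR', mul_nonneg hm.le ht'0]
  have hq : K ^ 2 - (A + B - mbar * C') * K - (C' - A * B) ≤ 0 := by
    nlinarith [hroot, hmK, h3]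
  have h5 : (2 * K - (A + B - mbar * C')) ^ 2 ≤ t' ^ 2 := by
    nlinarith [hq, ht'2]
  have hle : K ≤ K' := by
    rw [hK'def]
    nlinarith [h5, ht'0]
  have hgpos : 0 < K' ^ 2 - (A + B - mbar * C) * K' - (C - A * B) := by
    nlinarith [hroot', hmK', h3]
  rcases hle.lt_or_eq with h | h
  · exact h
  · exfalso; rw [h] at hroot; linarith [hroot, hgpos]

/-- Corollary on correlations: If (χ,π) and (χ',π') in (0,1]ⁿ have the
same weighted averages ⟨χ⟩ₐ = ⟨χ'⟩ₐ and ⟨π⟩ₐ = ⟨π'⟩ₐ, but ⟨χπ⟩_{a²} < ⟨χ'π'⟩_{a²},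
then α_u < α_u', where α_u = 1 − δ + κ m̄ n β and κ is the explicit larger-root formula. -/
theorem stmt12 (n : ℕ) (hn : 1 ≤ n) (a χ π χ' π' : Fin n → ℝ) (mbar β δ : ℝ)
    (ha : ∀ i, 0 < a i ∧ a i ≤ 1)
    (hχ : ∀ i, 0 < χ i ∧ χ i ≤ 1) (hπ : ∀ i, 0 < π i ∧ π i ≤ 1)
    (hχ' : ∀ i, 0 < χ' i ∧ χ' i ≤ 1) (hπ' : ∀ i, 0 < π' i ∧ π' i ≤ 1)
    (hm : 0 < mbar) (hm1 : mbar ≤ 1) (hβ : 0 < β) (hβ1 : β ≤ 1)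
    (hδ : 0 < δ) (hδ1 : δ ≤ 1) :
    let χa := (1 / (n : ℝ)) * ∑ i, a i * χ i
    let πa := (1 / (n : ℝ)) * ∑ i, a i * π i
    let χπa2 := (1 / (n : ℝ)) * ∑ i, a i ^ 2 * (χ i * π i)
    let χa' := (1 / (n : ℝ)) * ∑ i, a i * χ' i
    let πa' := (1 / (n : ℝ)) * ∑ i, a i * π' i
    let χπa2' := (1 / (n : ℝ)) * ∑ i, a i ^ 2 * (χ' i * π' i)
    let κ := (χa + πa - mbar * χπa2 +
      Real.sqrt ((χa + πa - mbar * χπa2) ^ 2 + 4 * (χπa2 - χa * πa))) / 2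
    let κ' := (χa' + πa' - mbar * χπa2' +
      Real.sqrt ((χa' + πa' - mbar * χπa2') ^ 2 + 4 * (χπa2' - χa' * πa'))) / 2
    χa = χa' → πa = πa' → χπa2 < χπa2' →
    0 ≤ (χa + πa - mbar * χπa2) ^ 2 + 4 * (χπa2 - χa * πa) →
    0 ≤ (χa' + πa' - mbar * χπa2') ^ 2 + 4 * (χπa2' - χa' * πa') →
      1 - δ + κ * mbar * n * β < 1 - δ + κ' * mbar * n * β := by
  intro A B C A' B' C' K K' h1 h2 h3 hD hD'
  have hn0 : (0:ℝ) < n := by exact_mod_cast hn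
  have hA1 : A ≤ 1 := avg_le_one' hn _ (fun i => mul_le_one₀ (ha i).2 (hχ i).1.le (hχ i).2)
  have hB1 : B ≤ 1 := avg_le_one' hn _ (fun i => mul_le_one₀ (ha i).2 (hπ i).1.le (hπ i).2)
  have hA0 : 0 < A := avg_pos' hn _ (fun i => mul_pos (ha i).1 (hχ i).1)
  have hB0 : 0 < B := avg_pos' hn _ (fun i => mul_pos (ha i).1 (hπ i).1)
  have hC0 : 0 < C :=
    avg_pos' hn _ (fun i => mul_pos (pow_pos (ha i).1 2) (mul_pos (hχ i).1 (hπ i).1))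
  have hfA : 0 ≤ 1 - mbar * A := by nlinarith
  have hfB : 0 ≤ 1 - mbar * B := by nlinarith
  rcases (mul_nonneg hfA hfB).lt_or_eq with hlt | heq
  · -- main case
    have hKval : K = (A + B - mbar * C +
        Real.sqrt ((A + B - mbar * C) ^ 2 + 4 * (C - A * B))) / 2 := rfl
    have hK'val : K' = (A + B - mbar * C' +
        Real.sqrt ((A + B - mbar * C') ^ 2 + 4 * (C' - A * B))) / 2 := by
      show (A' + B' - mbar * C' +
        Real.sqrt ((A' + B' - mbar * C') ^ 2 + 4 * (C' - A' * B'))) / 2 = _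
      rw [← h1, ← h2]
    have hD'2 : 0 ≤ (A + B - mbar * C') ^ 2 + 4 * (C' - A * B) := by
      rw [h1, h2]; exact hD'
    have hKK : K < K' := by
      rw [hKval, hK'val]
      exact kappa_mono A B C C' mbar hA1 hB1 hA0 hB0 hC0 h3 hm hm1 hD hD'2 hlt
    have hpos : (0:ℝ) < mbar * n * β := by positivity
    have h4 : K * (mbar * n * β) < K' * (mbar * n * β) :=
      mul_lt_mul_of_pos_right hKK hpos
    have e1 : K * mbar * n * β = K * (mbar * n * β) := by ring
    have e2 : K' * mbar * n * β = K' * (mbar * n * β) := by ring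
    rw [e1, e2]
    linarith
  · -- degenerate case: contradiction with h3
    exfalso
    rcases mul_eq_zero.mp heq.symm with h0 | h0
    · have hA : A = 1 := by nlinarith
      have : C = C' := key_eq' hn a χ π χ' π' ha hχ hχ' hA h1 h2
      linarith
    · have hB : B = 1 := by nlinarith
      have h' : (1 / (n : ℝ)) * ∑ i, a i ^ 2 * (π i * χ i)
          = (1 / (n : ℝ)) * ∑ i, a i ^ 2 * (π' i * χ' i) :=
        key_eq' hn a π χ π' χ' ha hπ hπ' hB h2 h1
      have ec : C = (1 / (n : ℝ)) * ∑ i, a i ^ 2 * (π i * χ i) := by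
        show (1 / (n : ℝ)) * ∑ i, a i ^ 2 * (χ i * π i) = _
        congr 1; exact Finset.sum_congr rfl fun i _ => by ring
      have ec' : C' = (1 / (n : ℝ)) * ∑ i, a i ^ 2 * (π' i * χ' i) := by
        show (1 / (n : ℝ)) * ∑ i, a i ^ 2 * (χ' i * π' i) = _
        congr 1; exact Finset.sum_congr rfl fun i _ => by ring
      rw [ec, ec', h'] at h3
      exact lt_irrefl _ h3
end

section
/- Suppose p(t+1)_i ≤ (1−δ)p(t)_i + β∑_j [1 − (1−ψ_i)(1−φ_j)]p(t)_j for all i and t, where p(t) ≥ 0 entrywise, δ, β ∈ (0,1], φ_j, ψ_i ∈ [0,1]. If 1 − δ + βρ(A) < 1 where A = 𝟙𝟙ᵀ − (𝟙−ψ)(𝟙−φ)ᵀ, then p(t) → 0 as t → ∞. -/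
open Matrix Filter

section specradAux

open Polynomial

section auxnorm
attribute [local instance] Matrix.linftyOpNormedRing Matrix.linftyOpNormedAlgebra

lemma my_entry_le {n : ℕ} (A : Matrix (Fin n) (Fin n) ℂ) (i j : Fin n) :
    ‖A i j‖ ≤ ‖A‖ := by
  have h1 : ‖A i j‖₊ ≤ ‖A‖₊ := by
    rw [Matrix.linfty_opNNNorm_def]
    refine le_trans (Finset.single_le_sum (f := fun k => ‖A i k‖₊)
      (fun k _ => zero_le) (Finset.mem_univ j)) ?_
    exact Finset.le_sup (f := fun i => ∑ j, ‖A i j‖₊) (Finset.mem_univ i)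
  exact h1

lemma my_pow_tendsto {n : ℕ} (hn : 0 < n) (M : Matrix (Fin n) (Fin n) ℂ)
    (hspec : ∀ z ∈ spectrum ℂ M, ‖z‖₊ < 1) :
    Tendsto (fun t => ‖M ^ t‖) atTop (nhds 0) := by
  haveI : Nonempty (Fin n) := ⟨⟨0, hn⟩⟩
  haveI : CompleteSpace (Matrix (Fin n) (Fin n) ℂ) := FiniteDimensional.complete ℂ _
  have hρ : spectralRadius ℂ M < 1 := by
    have := spectrum.spectralRadius_lt_of_forall_lt_of_nonempty (𝕜 := ℂ)
      (spectrum.nonempty M) (r := 1) hspec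
    simpa using this
  obtain ⟨r, hρr, hr1⟩ := ENNReal.lt_iff_exists_nnreal_btwn.mp hρ
  have hgel := spectrum.pow_nnnorm_pow_one_div_tendsto_nhds_spectralRadius M
  have hev : ∀ᶠ t : ℕ in atTop, ((‖M ^ t‖₊ : ENNReal)) ^ (1 / (t:ℝ)) < (r : ENNReal) :=
    hgel.eventually_lt_const hρr
  have hr1' : (r : ℝ) < 1 := by exact_mod_cast hr1
  have hgr : Tendsto (fun t : ℕ => (r : ℝ) ^ t) atTop (nhds 0) :=
    tendsto_pow_atTop_nhds_zero_of_lt_one r.coe_nonneg hr1'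
  refine squeeze_zero' (Eventually.of_forall fun t => norm_nonneg _) ?_ hgr
  filter_upwards [hev, Filter.eventually_ge_atTop 1] with t ht ht1
  have htne : (t : ℝ) ≠ 0 := Nat.cast_ne_zero.mpr (by omega)
  have : ((‖M ^ t‖₊ : ENNReal)) ≤ (r : ENNReal) ^ (t : ℝ) := by
    have := ENNReal.rpow_le_rpow ht.le (by positivity : (0:ℝ) ≤ (t:ℝ))
    rwa [← ENNReal.rpow_mul, one_div, inv_mul_cancel₀ htne, ENNReal.rpow_one] at this
  rw [ENNReal.rpow_natCast, ← ENNReal.coe_pow, ENNReal.coe_le_coe] at this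
  calc ‖M ^ t‖ ≤ ((r ^ t : NNReal) : ℝ) := this
    _ = (r : ℝ) ^ t := by push_cast; ring

lemma my_entries_tendsto {n : ℕ} (hn : 0 < n) (M : Matrix (Fin n) (Fin n) ℝ)
    (hspec : ∀ z ∈ spectrum ℂ (M.map (fun x => (x : ℂ))), ‖z‖₊ < 1) (i j : Fin n) :
    Tendsto (fun t => (M ^ t) i j) atTop (nhds 0) := by
  have h1 : ∀ t : ℕ, ‖(M ^ t) i j‖ ≤ ‖(M.map (fun x => (x : ℂ))) ^ t‖ := by
    intro t
    have hmap : (M.map (fun x => (x : ℂ))) ^ t = (M ^ t).map (fun x => (x : ℂ)) := by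
      exact
        (map_pow (Complex.ofRealHom.mapMatrix (m := Fin n)) M t).symm
    calc ‖(M ^ t) i j‖ = ‖(((M ^ t) i j : ℝ) : ℂ)‖ := by rw [Complex.norm_real]
      _ = ‖((M.map (fun x => (x : ℂ))) ^ t) i j‖ := by rw [hmap]; rfl
      _ ≤ _ := my_entry_le _ i j
  exact squeeze_zero_norm h1 (my_pow_tendsto hn _ hspec)

end auxnorm

lemma my_eval_charpoly {n : ℕ} (M : Matrix (Fin n) (Fin n) ℂ) (z : ℂ) :
    M.charpoly.eval z = (Matrix.scalar (Fin n) z - M).det := by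
  rw [Matrix.charpoly, eval_det, Matrix.matPolyEquiv_charmatrix]
  simp

lemma my_root_le_specRad {n : ℕ} (A : Matrix (Fin n) (Fin n) ℝ) (lam : ℂ)
    (h : (A.map (fun x => (x : ℂ))).charpoly.IsRoot lam) :
    ‖lam‖ ≤ specRad A := by
  apply le_csSup
  · have hq : (A.map (fun x => (x : ℂ))).charpoly ≠ 0 :=
      (Matrix.charpoly_monic _).ne_zero
    have hfin : Set.Finite {μ : ℂ | (A.map (fun x => (x : ℂ))).charpoly.IsRoot μ} :=
      Polynomial.finite_setOf_isRoot hq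
    have heq : {r : ℝ | ∃ μ : ℂ, (A.map (fun x => (x : ℂ))).charpoly.IsRoot μ ∧
        r = ‖μ‖} =
        (fun μ : ℂ => ‖μ‖) '' {μ : ℂ | (A.map (fun x => (x : ℂ))).charpoly.IsRoot μ} := by
      ext r; constructor
      · rintro ⟨μ, hμ, rfl⟩; exact ⟨μ, hμ, rfl⟩
      · rintro ⟨μ, hμ, rfl⟩; exact ⟨μ, hμ, rfl⟩
    rw [heq]
    exact (hfin.image _).bddAbove
  · exact ⟨lam, h, rfl⟩

end specradAux

/-- If p(t+1)ᵢ ≤ (1−δ)p(t)ᵢ + β∑ⱼ[1 − (1−ψᵢ)(1−φⱼ)]p(t)ⱼ with p(t) ≥ 0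
entrywise, δ, β ∈ (0,1], φ, ψ ∈ [0,1]ⁿ, and 1 − δ + βρ(A) < 1 where
A = 𝟙𝟙ᵀ − (𝟙−ψ)(𝟙−φ)ᵀ, then p(t) → 0. -/
theorem stmt17 (n : ℕ) (hn : 1 ≤ n) (δ β : ℝ) (hδ : 0 < δ) (hδ1 : δ ≤ 1)
    (hβ : 0 < β) (hβ1 : β ≤ 1) (φ ψ : Fin n → ℝ)
    (hφ : ∀ i, 0 ≤ φ i ∧ φ i ≤ 1) (hψ : ∀ i, 0 ≤ ψ i ∧ ψ i ≤ 1)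
    (p : ℕ → Fin n → ℝ) (hp : ∀ t i, 0 ≤ p t i)
    (hstep : ∀ t i, p (t + 1) i ≤
      (1 - δ) * p t i + β * ∑ j, (1 - (1 - ψ i) * (1 - φ j)) * p t j) :
    let one : Fin n → ℝ := fun _ => 1
    let A : Matrix (Fin n) (Fin n) ℝ := vecMulVec one one - vecMulVec (one - ψ) (one - φ)
    1 - δ + β * specRad A < 1 → Tendsto p atTop (nhds 0) := by
  intro one A hlt
  set c : ℝ := 1 - δ with hc
  have hc0 : 0 ≤ c := by simp [hc]; linarith
  -- entries of A
  have hA : ∀ i j, A i j = 1 - (1 - ψ i) * (1 - φ j) := by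
    intro i j
    simp [A, Matrix.vecMulVec_apply, one, Matrix.sub_apply, Pi.sub_apply]
  have hA0 : ∀ i j, 0 ≤ A i j := by
    intro i j; rw [hA]
    have h1 := (hψ i).1; have h2 := (hψ i).2
    have h3 := (hφ j).1; have h4 := (hφ j).2
    nlinarith
  set M : Matrix (Fin n) (Fin n) ℝ := c • 1 + β • A with hM
  have hMapply : ∀ i j, M i j = c * (if i = j then 1 else 0) + β * A i j := by
    intro i j
    simp [hM, Matrix.add_apply, Matrix.smul_apply, Matrix.one_apply, smul_eq_mul]
  have hM0 : ∀ i j, 0 ≤ M i j := by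
    intro i j
    rw [hMapply]
    have := hA0 i j
    split_ifs <;> nlinarith
  -- step bound via M
  have hmulVec : ∀ (v : Fin n → ℝ) i, (M *ᵥ v) i = c * v i + β * ∑ j, A i j * v j := by
    intro v i
    rw [hM, Matrix.add_mulVec, Matrix.smul_mulVec, Matrix.smul_mulVec,
      Matrix.one_mulVec]
    simp [Matrix.mulVec, dotProduct]
  have hbound : ∀ t i, p t i ≤ (M ^ t *ᵥ p 0) i := by
    intro t
    induction t with
    | zero => intro i; simp [pow_zero, Matrix.one_mulVec]
    | succ t ih =>
      intro i
      have h1 : p (t + 1) i ≤ (M *ᵥ p t) i := by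
        rw [hmulVec]
        refine (hstep t i).trans ?_
        have : ∑ j, (1 - (1 - ψ i) * (1 - φ j)) * p t j = ∑ j, A i j * p t j := by
          refine Finset.sum_congr rfl fun j _ => by rw [hA]
        rw [this]
      have h2 : (M *ᵥ p t) i ≤ (M *ᵥ (M ^ t *ᵥ p 0)) i := by
        simp only [Matrix.mulVec, dotProduct]
        exact Finset.sum_le_sum fun j _ =>
          mul_le_mul_of_nonneg_left (ih j) (hM0 i j)
      have h3 : (M *ᵥ (M ^ t *ᵥ p 0)) i = (M ^ (t + 1) *ᵥ p 0) i := by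
        rw [Matrix.mulVec_mulVec, ← pow_succ']
      exact h1.trans (h2.trans_eq h3)
  -- spectral bound for the complexification of M
  have hβc : (β : ℂ) ≠ 0 := by exact_mod_cast hβ.ne'
  have hspec : ∀ z ∈ spectrum ℂ (M.map (fun x => (x : ℂ))), ‖z‖₊ < 1 := by
    intro z hz
    rw [spectrum.mem_iff] at hz
    have halg : algebraMap ℂ (Matrix (Fin n) (Fin n) ℂ) z = Matrix.scalar (Fin n) z := by
      simp [Matrix.algebraMap_eq_diagonal, Matrix.scalar_apply]
    have hdet : (Matrix.scalar (Fin n) z - M.map (fun x => (x : ℂ))).det = 0 := by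
      by_contra h
      exact hz (by
        rw [halg]
        exact (Matrix.isUnit_iff_isUnit_det _).mpr (isUnit_iff_ne_zero.mpr h))
    set lam : ℂ := (z - (c : ℂ)) / (β : ℂ) with hlam
    have hfac : Matrix.scalar (Fin n) z - M.map (fun x => (x : ℂ)) =
        (β : ℂ) • (Matrix.scalar (Fin n) lam - A.map (fun x => (x : ℂ))) := by
      ext i j
      simp only [Matrix.sub_apply, Matrix.smul_apply, Matrix.scalar_apply,
        Matrix.diagonal_apply, Matrix.map_apply, smul_eq_mul, hMapply]
      have hbl : (β : ℂ) * lam = z - (c : ℂ) := by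
        rw [hlam]; field_simp
      split_ifs with hij
      · rw [mul_sub, hbl]
        push_cast
        ring
      · rw [mul_sub]
        push_cast
        ring
    have hdetA : (Matrix.scalar (Fin n) lam - A.map (fun x => (x : ℂ))).det = 0 := by
      rw [hfac, Matrix.det_smul] at hdet
      rcases mul_eq_zero.mp hdet with h | h
      · exact absurd h (pow_ne_zero _ hβc)
      · exact h
    have hroot : (A.map fun x => (x : ℂ)).charpoly.IsRoot lam := by
      show Polynomial.eval lam _ = 0
      rw [my_eval_charpoly]
      exact hdetA
    have hlamle : ‖lam‖ ≤ specRad A := my_root_le_specRad A lam hroot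
    have hz' : z = (c : ℂ) + (β : ℂ) * lam := by
      rw [hlam]; field_simp; ring
    have hzn : ‖z‖ < 1 := by
      have h1 : ‖z‖ ≤ c + β * ‖lam‖ := by
        rw [hz']
        refine (norm_add_le _ _).trans ?_
        rw [norm_mul, Complex.norm_real, Complex.norm_real, Real.norm_eq_abs,
          Real.norm_eq_abs, abs_of_nonneg hc0, abs_of_nonneg hβ.le]
      have h2 : β * ‖lam‖ ≤ β * specRad A :=
        mul_le_mul_of_nonneg_left hlamle hβ.le
      calc ‖z‖ ≤ c + β * ‖lam‖ := h1
        _ ≤ c + β * specRad A := by linarith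
        _ < 1 := by rw [hc]; linarith
    exact_mod_cast hzn
  have htends : ∀ i j, Tendsto (fun t => (M ^ t) i j) atTop (nhds 0) :=
    fun i j => my_entries_tendsto (by omega) M hspec i j
  -- conclude coordinatewise
  rw [tendsto_pi_nhds]
  intro i
  have hsum : Tendsto (fun t => ∑ j, (M ^ t) i j * p 0 j) atTop (nhds 0) := by
    have : Tendsto (fun t => ∑ j, (M ^ t) i j * p 0 j) atTop
        (nhds (∑ j : Fin n, 0 * p 0 j)) := by
      refine tendsto_finset_sum _ fun j _ => ?_
      exact (htends i j).mul_const _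
    simpa using this
  have h0 : (0 : Fin n → ℝ) i = 0 := rfl
  rw [h0]
  refine squeeze_zero (fun t => hp t i) (fun t => ?_) hsum
  exact (hbound t i).trans_eq (by simp [Matrix.mulVec, dotProduct])
end
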